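/- (Row antisymmetry of rdet(G_h).) Let G_h be the M×M matrix with entries G_{ij} = (p_u − λ_i)δ_{ij} − Σ_{a=1}^N x_{ja}p_{ia}/(u − z_a) in the algebra with [p_u, u] = h, [p_{ij}, x_{ij}] = h and all other generator pairs commuting. If σG_h denotes the matrix obtained from G_h by permuting rows by a permutation σ ∈ S_M, then rdet(σG_h) = sgn(σ)·rdet(G_h). -/

import Mathlib

open scoped BigOperators

/-- Row determinant over a (possibly noncommutative) ring. -/
noncomputable def rdet {n : ℕ} {R : Type*} [Ring R] (A : Matrix (Fin n) (Fin n) R) : R :=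
  ∑ σ : Equiv.Perm (Fin n),
    (Equiv.Perm.sign σ : ℤ) • (List.ofFn fun i => A i (σ i)).prod


section Comb
variable {R : Type*} [Ring R]

private lemma splitProd (l : List R) (k : ℕ) (h : k + 1 < l.length) :
    l.prod = (l.take k).prod * (l[k] * (l[k+1] * (l.drop (k+2)).prod)) := by
  have h0 : k < l.length := by omega
  rw [← List.prod_take_mul_prod_drop l k, List.drop_eq_getElem_cons h0, List.prod_cons,
    List.drop_eq_getElem_cons h, List.prod_cons]

private lemma rdet_swap_adj {n : ℕ} (H : Matrix (Fin (n+1)) (Fin (n+1)) R)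
    (hP : ∀ i j a b, H i a * H j b - H j b * H i a = H i b * H j a - H j a * H i b)
    (k : Fin n) :
    rdet (Matrix.of fun i j => H (Equiv.swap k.castSucc k.succ i) j) = - rdet H := by
  classical
  set s : Equiv.Perm (Fin (n+1)) := Equiv.swap k.castSucc k.succ with hs
  have hks : (k.castSucc : Fin (n+1)) ≠ k.succ := (Fin.castSucc_lt_succ (i := k)).ne
  have hsign : Equiv.Perm.sign s = -1 := Equiv.Perm.sign_swap hks
  -- notation
  set L1 : Equiv.Perm (Fin (n+1)) → List R := fun τ => List.ofFn fun i => H i (τ i) with hL1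
  set L2 : Equiv.Perm (Fin (n+1)) → List R := fun τ => List.ofFn fun i => H (s i) (τ (s i)) with hL2
  have hlen1 : ∀ τ, (L1 τ).length = n + 1 := fun τ => List.length_ofFn
  have hlen2 : ∀ τ, (L2 τ).length = n + 1 := fun τ => List.length_ofFn
  have hklt : (k : ℕ) + 1 < n + 1 := by omega
  have hcastv : ((k.castSucc : Fin (n+1)) : ℕ) = k := rfl
  have hsuccv : ((k.succ : Fin (n+1)) : ℕ) = k + 1 := rfl
  -- s fixes indices outside {k, k+1}
  have hsfix : ∀ i : Fin (n+1), (i : ℕ) ≠ k → (i : ℕ) ≠ k + 1 → s i = i := by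
    intro i h1 h2
    exact Equiv.swap_apply_of_ne_of_ne (fun e => h1 (by rw [e]; rfl))
      (fun e => h2 (by rw [e]; rfl))
  have hscast : s k.castSucc = k.succ := Equiv.swap_apply_left _ _
  have hssucc : s k.succ = k.castSucc := Equiv.swap_apply_right _ _
  -- pieces
  set A : Equiv.Perm (Fin (n+1)) → R := fun τ => ((L1 τ).take k).prod with hA
  set C : Equiv.Perm (Fin (n+1)) → R := fun τ => ((L1 τ).drop (k+2)).prod with hC
  set X : Equiv.Perm (Fin (n+1)) → R := fun τ => H k.castSucc (τ k.castSucc) with hX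
  set Y : Equiv.Perm (Fin (n+1)) → R := fun τ => H k.succ (τ k.succ) with hY
  have getL1 : ∀ τ (m : ℕ) (hm : m < n + 1), (L1 τ)[m]'(by rw [hlen1]; exact hm)
      = H ⟨m, hm⟩ (τ ⟨m, hm⟩) := by
    intro τ m hm; simp only [hL1, List.getElem_ofFn]
  have getL2 : ∀ τ (m : ℕ) (hm : m < n + 1), (L2 τ)[m]'(by rw [hlen2]; exact hm)
      = H (s ⟨m, hm⟩) (τ (s ⟨m, hm⟩)) := by
    intro τ m hm; simp only [hL2, List.getElem_ofFn]
  -- split products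
  have hP1 : ∀ τ, (L1 τ).prod = A τ * (X τ * (Y τ * C τ)) := by
    intro τ
    have := splitProd (L1 τ) k (by rw [hlen1]; omega)
    rw [this]
    congr 1
    congr 1
    · rw [getL1 τ k (by omega)]
      congr 1 <;> exact congrArg _ (Fin.ext rfl)
    congr 1
    · rw [getL1 τ (k+1) (by omega)]
      congr 1 <;> exact congrArg _ (Fin.ext rfl)
  have hL2take : ∀ τ, ((L2 τ).take k) = ((L1 τ).take k) := by
    intro τ
    apply List.ext_getElem
    · simp [hlen1 τ, hlen2 τ]
    intro m h₁ h₂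
    have hm : m < n + 1 := by
      have := (List.length_take (i := (k:ℕ)) (l := L2 τ)) ▸ h₁; omega
    have hmk : m < (k:ℕ) := by
      have := (List.length_take (i := (k:ℕ)) (l := L2 τ)) ▸ h₁
      have h2 := hlen2 τ; omega
    rw [List.getElem_take, List.getElem_take, getL1 τ m hm, getL2 τ m hm,
      hsfix ⟨m, hm⟩ (by simp; omega) (by simp; omega)]
  have hL2drop : ∀ τ, ((L2 τ).drop (k+2)) = ((L1 τ).drop (k+2)) := by
    intro τ
    apply List.ext_getElem
    · simp [hlen1 τ, hlen2 τ]
    intro m h₁ h₂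
    have hm : (k:ℕ) + 2 + m < n + 1 := by
      have := (List.length_drop (i := (k:ℕ)+2) (l := L2 τ)) ▸ h₁
      have h2 := hlen2 τ; omega
    rw [List.getElem_drop, List.getElem_drop, getL1 τ _ hm, getL2 τ _ hm,
      hsfix ⟨(k:ℕ)+2+m, hm⟩ (by simp; omega) (by simp; omega)]
  have hcastmk : ∀ (hm : (k:ℕ) < n + 1), (⟨(k:ℕ), hm⟩ : Fin (n+1)) = k.castSucc :=
    fun hm => Fin.ext rfl
  have hsuccmk : ∀ (hm : (k:ℕ)+1 < n + 1), (⟨(k:ℕ)+1, hm⟩ : Fin (n+1)) = k.succ :=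
    fun hm => Fin.ext rfl
  have hP2 : ∀ τ, (L2 τ).prod = A τ * (Y τ * (X τ * C τ)) := by
    intro τ
    rw [splitProd (L2 τ) k (by rw [hlen2]; omega)]
    rw [getL2 τ k (by omega), getL2 τ (k+1) (by omega)]
    rw [hcastmk, hsuccmk, hscast, hssucc, hL2take, hL2drop]
  have hAmul : ∀ τ, A (τ * s) = A τ := by
    intro τ
    show ((L1 (τ * s)).take k).prod = ((L1 τ).take k).prod
    congr 1
    apply List.ext_getElem
    · simp [hlen1]
    intro m h₁ h₂
    have hm : m < n + 1 := by
      have := (List.length_take (i := (k:ℕ)) (l := L1 (τ * s))) ▸ h₁; omega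
    have hmk : m < (k:ℕ) := by
      have := (List.length_take (i := (k:ℕ)) (l := L1 (τ * s))) ▸ h₁
      have h2 := hlen1 (τ * s); omega
    rw [List.getElem_take, List.getElem_take, getL1 _ m hm, getL1 _ m hm,
      Equiv.Perm.mul_apply, hsfix ⟨m, hm⟩ (by simp; omega) (by simp; omega)]
  have hCmul : ∀ τ, C (τ * s) = C τ := by
    intro τ
    show ((L1 (τ * s)).drop (k+2)).prod = ((L1 τ).drop (k+2)).prod
    congr 1
    apply List.ext_getElem
    · simp [hlen1]
    intro m h₁ h₂
    have hm : (k:ℕ) + 2 + m < n + 1 := by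
      have := (List.length_drop (i := (k:ℕ)+2) (l := L1 (τ*s))) ▸ h₁
      have h2 := hlen1 (τ*s); omega
    rw [List.getElem_drop, List.getElem_drop, getL1 _ _ hm, getL1 _ _ hm,
      Equiv.Perm.mul_apply, hsfix ⟨(k:ℕ)+2+m, hm⟩ (by simp; omega) (by simp; omega)]
  have hXmul : ∀ τ, X (τ * s) = H k.castSucc (τ k.succ) := by
    intro τ; show H k.castSucc ((τ * s) k.castSucc) = _
    rw [Equiv.Perm.mul_apply, hscast]
  have hYmul : ∀ τ, Y (τ * s) = H k.succ (τ k.castSucc) := by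
    intro τ; show H k.succ ((τ * s) k.succ) = _
    rw [Equiv.Perm.mul_apply, hssucc]
  have hsignmul : ∀ τ : Equiv.Perm (Fin (n+1)),
      ((Equiv.Perm.sign (τ * s) : ℤˣ) : ℤ) = -((Equiv.Perm.sign τ : ℤˣ) : ℤ) := by
    intro τ
    rw [Equiv.Perm.sign_mul, hsign]
    simp
  have hsne : ∀ τ : Equiv.Perm (Fin (n+1)), τ * s ≠ τ := by
    intro τ heq
    have hs1 : s = 1 := by
      have := congrArg (fun ρ => τ⁻¹ * ρ) heq
      simpa [mul_assoc] using this
    apply hks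
    rw [← hscast, hs1]; rfl
  -- the paired sum vanishes
  have hsum0 : ∑ τ : Equiv.Perm (Fin (n+1)),
      ((Equiv.Perm.sign τ : ℤˣ) : ℤ) • (A τ * ((X τ * Y τ - Y τ * X τ) * C τ)) = 0 := by
    apply Finset.sum_ninvolution (fun τ => τ * s)
    · intro τ
      rw [hsignmul, hAmul, hCmul, hXmul, hYmul,
        show H k.castSucc (τ k.succ) * H k.succ (τ k.castSucc)
            - H k.succ (τ k.castSucc) * H k.castSucc (τ k.succ)
          = X τ * Y τ - Y τ * X τ from (hP k.castSucc k.succ (τ k.castSucc) (τ k.succ)).symm]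
      rw [neg_smul]
      exact add_neg_cancel _
    · intro τ _; exact hsne τ
    · intro τ; exact Finset.mem_univ _
    · intro τ; rw [mul_assoc, hs, Equiv.swap_mul_self, mul_one]
  -- put everything together
  have hre : rdet (Matrix.of fun i j => H (s i) j)
      = ∑ τ : Equiv.Perm (Fin (n+1)), (-((Equiv.Perm.sign τ : ℤˣ) : ℤ)) • (L2 τ).prod := by
    rw [rdet]
    rw [← Equiv.sum_comp (Equiv.mulRight s)
      (fun τ => ((Equiv.Perm.sign τ : ℤˣ) : ℤ) • (List.ofFn fun i => (Matrix.of fun i j => H (s i) j) i (τ i)).prod)]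
    apply Finset.sum_congr rfl
    intro τ _
    simp only [Equiv.coe_mulRight, Matrix.of_apply]
    rw [hsignmul]
    simp only [Equiv.Perm.mul_apply]
    rfl
  have key : rdet (Matrix.of fun i j => H (s i) j) + rdet H = 0 := by
    rw [hre, rdet, ← Finset.sum_add_distrib]
    rw [← hsum0]
    apply Finset.sum_congr rfl
    intro τ _
    have e1 : (List.ofFn fun i => H i (τ i)).prod = (L1 τ).prod := rfl
    rw [e1, hP1, hP2, neg_smul, ← smul_neg, ← smul_add]
    congr 1
    noncomm_ring
  exact eq_neg_of_add_eq_zero_left key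

private lemma rdet_perm {M : ℕ} (H : Matrix (Fin M) (Fin M) R)
    (hP : ∀ i j a b, H i a * H j b - H j b * H i a = H i b * H j a - H j a * H i b)
    (σ : Equiv.Perm (Fin M)) :
    rdet (Matrix.of fun i j => H (σ i) j) = ((Equiv.Perm.sign σ : ℤˣ) : ℤ) • rdet H := by
  classical
  cases M with
  | zero =>
    have hσ : σ = 1 := by ext i; exact i.elim0
    subst hσ
    have e : (Matrix.of fun i j => H ((1 : Equiv.Perm (Fin 0)) i) j) = H := rfl
    rw [e]
    simp
  | succ n =>
    have hmem : σ ∈ Submonoid.closure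
        (Set.range fun i : Fin n => Equiv.swap i.castSucc i.succ) := by
      rw [Equiv.Perm.mclosure_swap_castSucc_succ]; exact Submonoid.mem_top σ
    have main : ∀ σ' ∈ Submonoid.closure
        (Set.range fun i : Fin n => Equiv.swap i.castSucc i.succ),
        ∀ H : Matrix (Fin (n+1)) (Fin (n+1)) R,
        (∀ i j a b, H i a * H j b - H j b * H i a = H i b * H j a - H j a * H i b) →
        rdet (Matrix.of fun i j => H (σ' i) j) = ((Equiv.Perm.sign σ' : ℤˣ) : ℤ) • rdet H := by
      intro σ' hσ'
      induction hσ' using Submonoid.closure_induction with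
      | mem τ hτ =>
        obtain ⟨k, rfl⟩ := hτ
        intro H hH
        rw [rdet_swap_adj H hH k, Equiv.Perm.sign_swap (Fin.castSucc_lt_succ (i := k)).ne]
        simp
      | one =>
        intro H hH
        have e : (Matrix.of fun i j => H ((1 : Equiv.Perm (Fin (n+1))) i) j) = H := rfl
        rw [e]; simp
      | mul a b ha hb iha ihb =>
        intro H hH
        have hH' : ∀ i j a' b',
            (Matrix.of fun i j => H (a i) j) i a' * (Matrix.of fun i j => H (a i) j) j b'
              - (Matrix.of fun i j => H (a i) j) j b' * (Matrix.of fun i j => H (a i) j) i a'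
            = (Matrix.of fun i j => H (a i) j) i b' * (Matrix.of fun i j => H (a i) j) j a'
              - (Matrix.of fun i j => H (a i) j) j a' * (Matrix.of fun i j => H (a i) j) i b' :=
          fun i j a' b' => hH (a i) (a j) a' b'
        have e : (Matrix.of fun i j => H ((a * b) i) j)
            = (Matrix.of fun i j => (Matrix.of fun i' j' => H (a i') j') (b i) j) := rfl
        rw [e, ihb _ hH', iha H hH, smul_smul]
        congr 1
        rw [Equiv.Perm.sign_mul]
        simp [mul_comm]
    exact main σ hmem H hP
end Comb



private lemma mulLC {R : Type*} [Ring R] {a b : R} (h : Commute a b) (c : R) :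
    a * (b * c) = b * (a * c) := by
  rw [← mul_assoc, h.eq, mul_assoc]

private lemma key_comm {M N : ℕ} {R : Type*} [Ring R] [Algebra ℂ R]
    (h : ℂ) (lam : Fin M → ℂ) (pu : R) (x p : Fin M → Fin N → R) (w : Fin N → R)
    (hpx : ∀ i j k l, p i j * x k l - x k l * p i j =
      if i = k ∧ j = l then algebraMap ℂ R h else 0)
    (hxx : ∀ i j k l, Commute (x i j) (x k l))
    (hpp : ∀ i j k l, Commute (p i j) (p k l))
    (hpux : ∀ i j, Commute pu (x i j)) (hpup : ∀ i j, Commute pu (p i j))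
    (hwx : ∀ a i j, Commute (w a) (x i j))
    (hwp : ∀ a i j, Commute (w a) (p i j))
    (hww : ∀ a b, Commute (w a) (w b))
    (hpuw : ∀ a, pu * w a - w a * pu = -(algebraMap ℂ R h) * (w a * w a))
    (G : Matrix (Fin M) (Fin M) R)
    (hG : ∀ i j, G i j =
      (if i = j then pu - algebraMap ℂ R (lam i) else 0) - ∑ a, x j a * p i a * w a) :
    ∀ i j a b, G i a * G j b - G j b * G i a = G i b * G j a - G j a * G i b := by
  classical
  set hC : R := algebraMap ℂ R h with hhC
  have cC : ∀ r : R, Commute r hC := fun r => (Algebra.commutes h r).symm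
  set S : Fin M → Fin M → R := fun i j => ∑ c, x j c * p i c * w c with hS
  set Q : Fin M → Fin M → R := fun i j => ∑ c, hC * (x j c * (p i c * (w c * w c))) with hQ
  -- pointwise commutator of the summands of S
  have lem1 : ∀ (i j a b : Fin M) (c d : Fin N),
      (x a c * p i c * w c) * (x b d * p j d * w d)
        - (x b d * p j d * w d) * (x a c * p i c * w c)
      = (if i = b ∧ c = d then hC * (x a c * (p j d * (w c * w d))) else 0)
        - (if j = a ∧ d = c then hC * (x b d * (p i c * (w d * w c))) else 0) := by
    intro i j a b c d
    have e1 : p i c * x b d = (if i = b ∧ c = d then hC else 0) + x b d * p i c :=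
      sub_eq_iff_eq_add.mp (hpx i c b d)
    have e2 : p j d * x a c = (if j = a ∧ d = c then hC else 0) + x a c * p j d :=
      sub_eq_iff_eq_add.mp (hpx j d a c)
    have cK : ∀ (P : Prop) [Decidable P] (r : R), r * (if P then hC else 0) = (if P then hC else 0) * r := by
      intro P _ r; split_ifs
      · exact (Algebra.commutes h r).symm ▸ (Algebra.commutes h r).symm
      · simp
    have eA : x a c * p i c * w c * (x b d * p j d * w d)
        = (if i = b ∧ c = d then hC else 0) * (x a c * (p j d * (w c * w d)))
          + x a c * (x b d * (p i c * (p j d * (w c * w d)))) := by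
      simp only [mul_assoc]
      rw [mulLC (hwx c b d), mulLC (hwp c j d)]
      rw [show p i c * (x b d * (p j d * (w c * w d)))
          = (if i = b ∧ c = d then hC else 0) * (p j d * (w c * w d))
            + x b d * (p i c * (p j d * (w c * w d))) by
        rw [← mul_assoc, e1, add_mul, mul_assoc]]
      rw [mul_add]
      congr 1
      rw [← mul_assoc, cK, mul_assoc]
    have eB : x b d * p j d * w d * (x a c * p i c * w c)
        = (if j = a ∧ d = c then hC else 0) * (x b d * (p i c * (w d * w c)))
          + x b d * (x a c * (p j d * (p i c * (w d * w c)))) := by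
      simp only [mul_assoc]
      rw [mulLC (hwx d a c), mulLC (hwp d i c)]
      rw [show p j d * (x a c * (p i c * (w d * w c)))
          = (if j = a ∧ d = c then hC else 0) * (p i c * (w d * w c))
            + x a c * (p j d * (p i c * (w d * w c))) by
        rw [← mul_assoc, e2, add_mul, mul_assoc]]
      rw [mul_add]
      congr 1
      rw [← mul_assoc, cK, mul_assoc]
    have eH : x a c * (x b d * (p i c * (p j d * (w c * w d))))
        = x b d * (x a c * (p j d * (p i c * (w d * w c)))) := by
      rw [mulLC (hxx a c b d), mulLC (hpp i c j d), (hww c d).eq]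
    rw [eA, eB, eH, ite_mul, ite_mul, zero_mul, zero_mul]
    abel
  -- commutator of two S's
  have lemSS : ∀ i j a b, S i a * S j b - S j b * S i a
      = (if i = b then Q j a else 0) - (if j = a then Q i b else 0) := by
    intro i j a b
    have eL : S i a * S j b
        = ∑ c, ∑ d, (x a c * p i c * w c) * (x b d * p j d * w d) := by
      rw [hS]; simp only; rw [Finset.sum_mul_sum]
    have eR : S j b * S i a
        = ∑ c, ∑ d, (x b d * p j d * w d) * (x a c * p i c * w c) := by
      rw [hS]; simp only; rw [Finset.sum_mul_sum]; exact Finset.sum_comm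
    rw [eL, eR, ← Finset.sum_sub_distrib]
    simp only [← Finset.sum_sub_distrib]
    have : ∀ c d, (x a c * p i c * w c) * (x b d * p j d * w d)
        - (x b d * p j d * w d) * (x a c * p i c * w c)
        = (if i = b ∧ c = d then hC * (x a c * (p j d * (w c * w d))) else 0)
          - (if j = a ∧ d = c then hC * (x b d * (p i c * (w d * w c))) else 0) :=
      fun c d => lem1 i j a b c d
    rw [Finset.sum_congr rfl fun c _ => Finset.sum_congr rfl fun d _ => this c d]
    simp only [Finset.sum_sub_distrib]
    congr 1
    · by_cases hib : i = b
      · simp [hib, Finset.sum_ite_eq, hQ]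
      · simp [hib]
    · by_cases hja : j = a
      · simp [hja, Finset.sum_ite_eq', hQ]
      · simp [hja]
  -- commutator of pu with S
  have lemPuS : ∀ j b, pu * S j b - S j b * pu = -(Q j b) := by
    intro j b
    rw [hS, hQ]
    simp only
    rw [Finset.mul_sum, Finset.sum_mul, ← Finset.sum_sub_distrib, ← Finset.sum_neg_distrib]
    apply Finset.sum_congr rfl
    intro c _
    simp only [mul_assoc]
    rw [mulLC (hpux b c), mulLC (hpup j c), ← mul_sub, ← mul_sub, hpuw c, neg_mul]
    simp only [mul_neg]
    rw [mulLC ((cC (p j c))), mulLC (cC (x b c))]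
  -- main commutator formula
  have key : ∀ i j a b, G i a * G j b - G j b * G i a
      = ((if i = a then Q j b else 0) - (if j = b then Q i a else 0))
        + ((if i = b then Q j a else 0) - (if j = a then Q i b else 0)) := by
    intro i j a b
    have hGia : G i a = (if i = a then pu - algebraMap ℂ R (lam i) else 0) - S i a := hG i a
    have hGjb : G j b = (if j = b then pu - algebraMap ℂ R (lam j) else 0) - S j b := hG j b
    set D1 : R := (if i = a then pu - algebraMap ℂ R (lam i) else 0) with hD1
    set D2 : R := (if j = b then pu - algebraMap ℂ R (lam j) else 0) with hD2
    rw [hGia, hGjb]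
    have expand : (D1 - S i a) * (D2 - S j b) - (D2 - S j b) * (D1 - S i a)
        = (D1 * D2 - D2 * D1) - (D1 * S j b - S j b * D1)
          - (S i a * D2 - D2 * S i a) + (S i a * S j b - S j b * S i a) := by
      noncomm_ring
    rw [expand]
    have hDD : D1 * D2 - D2 * D1 = 0 := by
      have c1 : Commute pu (algebraMap ℂ R (lam j)) := (Algebra.commutes (lam j) pu).symm
      have cD : Commute (pu - algebraMap ℂ R (lam i)) (pu - algebraMap ℂ R (lam j)) :=
        Commute.sub_left ((Commute.refl pu).sub_right c1)
          (Algebra.commutes (lam i) (pu - algebraMap ℂ R (lam j)))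
      rw [hD1, hD2]
      split_ifs <;> simp [cD.eq]
    have hDS1 : D1 * S j b - S j b * D1 = if i = a then -(Q j b) else 0 := by
      rw [hD1]
      split_ifs with hia
      · have e : (pu - algebraMap ℂ R (lam i)) * S j b - S j b * (pu - algebraMap ℂ R (lam i))
            = (pu * S j b - S j b * pu)
              - (algebraMap ℂ R (lam i) * S j b - S j b * algebraMap ℂ R (lam i)) := by
          noncomm_ring
        rw [e, lemPuS j b, Algebra.commutes (lam i) (S j b)]
        simp
      · simp
    have hDS2 : S i a * D2 - D2 * S i a = if j = b then Q i a else 0 := by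
      rw [hD2]
      split_ifs with hjb
      · have e : S i a * (pu - algebraMap ℂ R (lam j)) - (pu - algebraMap ℂ R (lam j)) * S i a
            = -((pu * S i a - S i a * pu)
              - (algebraMap ℂ R (lam j) * S i a - S i a * algebraMap ℂ R (lam j))) := by
          noncomm_ring
        rw [e, lemPuS i a, Algebra.commutes (lam j) (S i a)]
        simp
      · simp
    rw [hDD, hDS1, hDS2, lemSS i j a b]
    have e1 : (if i = a then -(Q j b) else 0) = -(if i = a then Q j b else 0) := by
      split_ifs <;> simp
    rw [e1]
    abel
  intro i j a b
  rw [key i j a b, key i j b a]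
  abel

/-- Row antisymmetry of `rdet(G_h)`: if `G` is the matrix with entries
`G_{ij} = (p_u − λ_i)δ_{ij} − Σ_a x_{ja}p_{ia}/(u − z_a)` in the algebra `A_h`
(with `[p_u, u] = h`, `[p_{ij}, x_{ij}] = h`, all other pairs of generators
commuting, `w_a = (u − z_a)⁻¹`), then permuting the rows of `G` by `σ`
multiplies the row determinant by `sgn(σ)`. -/
theorem rdet_row_antisymmetry {M N : ℕ} {R : Type*} [Ring R] [Algebra ℂ R]
    (h : ℂ) (z : Fin N → ℂ) (lam : Fin M → ℂ)
    (u pu : R) (x p : Fin M → Fin N → R) (w : Fin N → R)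
    (hpuu : pu * u - u * pu = algebraMap ℂ R h)
    (hpx : ∀ i j k l, p i j * x k l - x k l * p i j =
      if i = k ∧ j = l then algebraMap ℂ R h else 0)
    (hxx : ∀ i j k l, Commute (x i j) (x k l))
    (hpp : ∀ i j k l, Commute (p i j) (p k l))
    (hux : ∀ i j, Commute u (x i j)) (hup : ∀ i j, Commute u (p i j))
    (hpux : ∀ i j, Commute pu (x i j)) (hpup : ∀ i j, Commute pu (p i j))
    (hw1 : ∀ a, (u - algebraMap ℂ R (z a)) * w a = 1)
    (hw2 : ∀ a, w a * (u - algebraMap ℂ R (z a)) = 1)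
    (hwx : ∀ a i j, Commute (w a) (x i j))
    (hwp : ∀ a i j, Commute (w a) (p i j))
    (hww : ∀ a b, Commute (w a) (w b))
    (hpuw : ∀ a, pu * w a - w a * pu = -(algebraMap ℂ R h) * (w a * w a))
    (G : Matrix (Fin M) (Fin M) R)
    (hG : ∀ i j, G i j =
      (if i = j then pu - algebraMap ℂ R (lam i) else 0) - ∑ a, x j a * p i a * w a)
    (σ : Equiv.Perm (Fin M)) :
    rdet (Matrix.of fun i j => G (σ i) j) = (Equiv.Perm.sign σ : ℤ) • rdet G := by
  exact rdet_perm G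
    (key_comm h lam pu x p w hpx hxx hpp hpux hpup hwx hwp hww hpuw G hG) σ
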